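/- Let H₀ be an odd-length N mirror-symmetric field-free tridiagonal chain with PST at time t₀, and θ ∈ ℝ. Define H̃ by replacing the two central couplings: J_{(N−1)/2} → √2 cos θ · J_{(N−1)/2} and J_{(N+1)/2} → √2 sin θ · J_{(N+1)/2}, keeping all other couplings. Then e^{-iH̃t₀}|1⟩ = e^{iφ}(cos 2θ |1⟩ + sin 2θ |N⟩) up to phases, i.e., H̃ exhibits fractional revival at time t₀ with amplitudes cos 2θ and sin 2θ on sites 1 and N. -/

import Mathlib

open Matrix

namespace Stmt17Aux

def rv (M : ℕ) (i : Fin (2*M+1)) : Fin (2*M+1) := ⟨2*M - (i:ℕ), by omega⟩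

def dd (M : ℕ) (a : ℝ) (i : Fin (2*M+1)) : ℂ :=
  if (i:ℕ) < M then (a:ℂ) else if (i:ℕ) = M then 1 else -(a:ℂ)

def mixM (M : ℕ) (a b : ℝ) : Matrix (Fin (2*M+1)) (Fin (2*M+1)) ℂ :=
  Matrix.of fun i j =>
    (if j = i then dd M a i else 0) + (if j = rv M i ∧ (i:ℕ) ≠ M then (b:ℂ) else 0)

def triM (M : ℕ) (K : ℕ → ℝ) : Matrix (Fin (2*M+1)) (Fin (2*M+1)) ℂ :=
  Matrix.of fun i j =>
    (if (j:ℕ) = (i:ℕ)+1 then (K i : ℂ) else 0) + (if (i:ℕ) = (j:ℕ)+1 then (K j : ℂ) else 0)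

lemma sum_ite_val {n : ℕ} (c : ℕ) (f : Fin n → ℂ) :
    (∑ k : Fin n, if (k:ℕ) = c then f k else 0) = if h : c < n then f ⟨c, h⟩ else 0 := by
  split
  · next h =>
    rw [Finset.sum_eq_single (⟨c, h⟩ : Fin n)]
    · simp
    · intro k _ hk
      exact if_neg (fun hv => hk (Fin.ext hv))
    · simp
  · next h =>
    apply Finset.sum_eq_zero
    intro k _
    rw [if_neg]
    omega

lemma mix_mul_apply (M : ℕ) (a b : ℝ) (X : Matrix (Fin (2*M+1)) (Fin (2*M+1)) ℂ)
    (i j : Fin (2*M+1)) :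
    (mixM M a b * X) i j
      = dd M a i * X i j + (if (i:ℕ) ≠ M then (b:ℂ) * X (rv M i) j else 0) := by
  rw [Matrix.mul_apply]
  have h : ∀ k, mixM M a b i k * X k j
      = (if k = i then dd M a i * X i j else 0)
        + (if k = rv M i ∧ (i:ℕ) ≠ M then (b:ℂ) * X (rv M i) j else 0) := by
    intro k
    simp only [mixM, Matrix.of_apply]
    by_cases h1 : k = i
    · subst h1
      have h2 : ¬(k = rv M k ∧ (k:ℕ) ≠ M) := by
        simp only [Fin.ext_iff, rv, not_and]
        omega
      rw [if_pos rfl, if_neg h2, if_pos rfl, if_neg h2, add_zero, add_zero]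
    · by_cases h2 : k = rv M i ∧ (i:ℕ) ≠ M
      · rw [if_neg h1, if_pos h2, if_neg h1, if_pos h2, zero_add, zero_add, h2.1]
      · rw [if_neg h1, if_neg h2, if_neg h1, if_neg h2, add_zero, zero_mul]
  rw [Finset.sum_congr rfl (fun k _ => h k), Finset.sum_add_distrib]
  congr 1
  · rw [Finset.sum_ite_eq' Finset.univ i, if_pos (Finset.mem_univ i)]
  · by_cases hM : (i:ℕ) ≠ M
    · have h5 : ∀ k, (if k = rv M i ∧ (i:ℕ) ≠ M then (b:ℂ) * X (rv M i) j else 0)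
          = if k = rv M i then (b:ℂ) * X (rv M i) j else 0 := by
        intro k; simp [hM]
      rw [Finset.sum_congr rfl (fun k _ => h5 k),
        Finset.sum_ite_eq' Finset.univ (rv M i), if_pos (Finset.mem_univ _), if_pos hM]
    · simp [hM]

lemma tri_mul_apply (M : ℕ) (K : ℕ → ℝ) (X : Matrix (Fin (2*M+1)) (Fin (2*M+1)) ℂ)
    (i j : Fin (2*M+1)) :
    (triM M K * X) i j
      = (if h : (i:ℕ) < 2*M then (K i : ℂ) * X ⟨(i:ℕ)+1, by omega⟩ j else 0)
        + (if h : 1 ≤ (i:ℕ) then (K ((i:ℕ)-1) : ℂ) * X ⟨(i:ℕ)-1, by omega⟩ j else 0) := by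
  rw [Matrix.mul_apply]
  have h : ∀ k : Fin (2*M+1), triM M K i k * X k j
      = (if (k:ℕ) = (i:ℕ)+1 then (K i : ℂ) * X k j else 0)
        + (if (k:ℕ) = (i:ℕ)-1 ∧ 1 ≤ (i:ℕ) then (K ((i:ℕ)-1) : ℂ) * X k j else 0) := by
    intro k
    simp only [triM, Matrix.of_apply]
    by_cases h1 : (k:ℕ) = (i:ℕ)+1
    · have h2 : ¬((i:ℕ) = (k:ℕ)+1) := by omega
      have h3 : ¬((k:ℕ) = (i:ℕ)-1 ∧ 1 ≤ (i:ℕ)) := by omega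
      rw [if_pos h1, if_neg h2, add_zero, if_pos h1, if_neg h3, add_zero]
    · by_cases h2 : (i:ℕ) = (k:ℕ)+1
      · have h3 : (k:ℕ) = (i:ℕ)-1 ∧ 1 ≤ (i:ℕ) := by omega
        have h4 : (i:ℕ)-1 = (k:ℕ) := by omega
        rw [if_neg h1, if_pos h2, zero_add, if_neg h1, if_pos h3, zero_add, h4]
      · have h3 : ¬((k:ℕ) = (i:ℕ)-1 ∧ 1 ≤ (i:ℕ)) := by omega
        rw [if_neg h1, if_neg h2, if_neg h1, if_neg h3]
        simp
  rw [Finset.sum_congr rfl (fun k _ => h k), Finset.sum_add_distrib]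
  congr 1
  · rw [sum_ite_val ((i:ℕ)+1) (fun k => (K i : ℂ) * X k j)]
    by_cases hi : (i:ℕ) < 2*M
    · rw [dif_pos (by omega : (i:ℕ)+1 < 2*M+1), dif_pos hi]
    · rw [dif_neg (by omega : ¬((i:ℕ)+1 < 2*M+1)), dif_neg hi]
  · by_cases hi : 1 ≤ (i:ℕ)
    · have h5 : ∀ k : Fin (2*M+1), (if (k:ℕ) = (i:ℕ)-1 ∧ 1 ≤ (i:ℕ) then (K ((i:ℕ)-1) : ℂ) * X k j else 0)
          = if (k:ℕ) = (i:ℕ)-1 then (K ((i:ℕ)-1) : ℂ) * X k j else 0 := by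
        intro k; simp [hi]
      rw [dif_pos hi, Finset.sum_congr rfl (fun k _ => h5 k),
        sum_ite_val ((i:ℕ)-1) (fun k => (K ((i:ℕ)-1) : ℂ) * X k j),
        dif_pos (by omega : (i:ℕ)-1 < 2*M+1)]
    · simp [hi]

end Stmt17Aux

namespace Stmt17Aux

lemma mix_mul_mix (M : ℕ) (a b : ℝ) (hab : a^2 + b^2 = 1) :
    mixM M a b * mixM M a b = 1 := by
  have habC : ((a:ℂ))^2 + ((b:ℂ))^2 = 1 := by exact_mod_cast hab
  ext i j
  rw [mix_mul_apply, Matrix.one_apply]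
  simp only [mixM, Matrix.of_apply, dd, rv, Fin.ext_iff]
  split_ifs <;> first | rfl | (exfalso; omega) | ring1 | (linear_combination habC)

end Stmt17Aux



namespace Stmt17Aux

set_option maxHeartbeats 2000000 in
set_option linter.unusedTactic false in
set_option linter.unreachableTactic false in
lemma key (M : ℕ) (hM : 1 ≤ M) (a b : ℝ) (hab : a^2 + b^2 = 1) (J Jt : ℕ → ℝ)
    (hs : ∀ k, k < 2*M → J k = J (2*M-1-k))
    (hJt : ∀ k, Jt k = if k = M-1 then (a+b)*J k else if k = M then (b-a)*J k else J k) :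
    triM M Jt * mixM M a b = mixM M a b * triM M J := by
  have habC : ((a:ℂ))^2 + ((b:ℂ))^2 = 1 := by exact_mod_cast hab
  ext i j
  rw [tri_mul_apply, mix_mul_apply]
  simp only [mixM, triM, Matrix.of_apply, dd, rv, hJt, Fin.ext_iff]
  rcases show ((i:ℕ))+1 < M ∨ ((i:ℕ))+1 = M ∨ ((i:ℕ)) = M ∨ ((i:ℕ)) = M+1 ∨ M+1 < ((i:ℕ))
      from by omega with hR | hR | hR | hR | hR
  · simp only [show (((i:ℕ)) < 2*M) = True from eq_true (by omega),
      show (((i:ℕ)) = M-1) = False from eq_false (by omega),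
      show (((i:ℕ)) = M) = False from eq_false (by omega),
      show (((i:ℕ))+1 < M) = True from eq_true (by omega),
      show (((i:ℕ))+1 = M) = False from eq_false (by omega),
      show (((i:ℕ))+1 ≠ M) = True from eq_true (by omega),
      show (((i:ℕ))-1 = M-1) = False from eq_false (by omega),
      show (((i:ℕ))-1 = M) = False from eq_false (by omega),
      show (((i:ℕ))-1 < M) = True from eq_true (by omega),
      show (((i:ℕ)) < M) = True from eq_true (by omega),
      show (((i:ℕ)) ≠ M) = True from eq_true (by omega),
      dite_true, dite_false, ite_true, ite_false, and_true, and_false, true_and, false_and]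
    split_ifs <;> (first
    | (exfalso; omega)
    | (push_cast; ring1)
    | (rw [show ((j:ℕ)) = (i:ℕ)-1 from by omega]; push_cast; ring1)
    | (rw [show ((j:ℕ)) = 2*M-1-((i:ℕ)) from by omega, ← hs ((i:ℕ)) (by omega)]; push_cast; ring1)
    | (rw [show 2*M-((i:ℕ)) = 2*M-1-((i:ℕ)-1) from by omega, ← hs ((i:ℕ)-1) (by omega)]; push_cast; ring1)
    | (rw [show ((j:ℕ)) = (i:ℕ)-1 from by omega, show 2*M-((i:ℕ)) = 2*M-1-((i:ℕ)-1) from by omega,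
        ← hs ((i:ℕ)-1) (by omega)]; push_cast; ring1)
    | (rw [show ((j:ℕ)) = (i:ℕ)-1 from by omega, hs ((i:ℕ)-1) (by omega),
        show 2*M-1-((i:ℕ)-1) = ((i:ℕ)) from by omega]; push_cast;
        linear_combination ((J (i:ℕ) : ℝ) : ℂ) * habC)
    | (rw [hs ((i:ℕ)-1) (by omega), show 2*M-1-((i:ℕ)-1) = ((i:ℕ)) from by omega]; push_cast;
        linear_combination ((J (i:ℕ) : ℝ) : ℂ) * habC))
  · simp only [show (((i:ℕ)) < 2*M) = True from eq_true (by omega),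
      show (((i:ℕ)) = M-1) = True from eq_true (by omega),
      show (((i:ℕ)) = M) = False from eq_false (by omega),
      show (((i:ℕ))+1 < M) = False from eq_false (by omega),
      show (((i:ℕ))+1 = M) = True from eq_true (by omega),
      show (((i:ℕ))+1 ≠ M) = False from eq_false (by omega),
      show (((i:ℕ)) < M) = True from eq_true (by omega),
      show (((i:ℕ)) ≠ M) = True from eq_true (by omega),
      dite_true, dite_false, ite_true, ite_false, and_true, and_false, true_and, false_and]
    split_ifs <;> (first
    | (exfalso; omega)
    | (push_cast; ring1)
    | (rw [show ((j:ℕ)) = (i:ℕ)-1 from by omega]; push_cast; ring1)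
    | (rw [show ((j:ℕ)) = 2*M-1-((i:ℕ)) from by omega, ← hs ((i:ℕ)) (by omega)]; push_cast; ring1)
    | (rw [show 2*M-((i:ℕ)) = 2*M-1-((i:ℕ)-1) from by omega, ← hs ((i:ℕ)-1) (by omega)]; push_cast; ring1)
    | (rw [show ((j:ℕ)) = (i:ℕ)-1 from by omega, show 2*M-((i:ℕ)) = 2*M-1-((i:ℕ)-1) from by omega,
        ← hs ((i:ℕ)-1) (by omega)]; push_cast; ring1)
    | (rw [show ((j:ℕ)) = (i:ℕ)-1 from by omega, hs ((i:ℕ)-1) (by omega),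
        show 2*M-1-((i:ℕ)-1) = ((i:ℕ)) from by omega]; push_cast;
        linear_combination ((J (i:ℕ) : ℝ) : ℂ) * habC)
    | (rw [hs ((i:ℕ)-1) (by omega), show 2*M-1-((i:ℕ)-1) = ((i:ℕ)) from by omega]; push_cast;
        linear_combination ((J (i:ℕ) : ℝ) : ℂ) * habC))
  · simp only [show (((i:ℕ)) < 2*M) = True from eq_true (by omega),
      show (((i:ℕ)) = M-1) = False from eq_false (by omega),
      show (((i:ℕ)) = M) = True from eq_true (by omega),
      show (((i:ℕ))+1 < M) = False from eq_false (by omega),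
      show (((i:ℕ))+1 = M) = False from eq_false (by omega),
      show (((i:ℕ))+1 ≠ M) = True from eq_true (by omega),
      show (1 ≤ ((i:ℕ))) = True from eq_true (by omega),
      show (((i:ℕ))-1 = M-1) = True from eq_true (by omega),
      show (((i:ℕ))-1 = M) = False from eq_false (by omega),
      show (((i:ℕ))-1 < M) = True from eq_true (by omega),
      show (((i:ℕ))-1 ≠ M) = True from eq_true (by omega),
      show (((i:ℕ)) < M) = False from eq_false (by omega),
      show (((i:ℕ)) ≠ M) = False from eq_false (by omega),
      dite_true, dite_false, ite_true, ite_false, and_true, and_false, true_and, false_and]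
    split_ifs <;> (first
    | (exfalso; omega)
    | (push_cast; ring1)
    | (rw [show ((j:ℕ)) = (i:ℕ)-1 from by omega]; push_cast; ring1)
    | (rw [show ((j:ℕ)) = 2*M-1-((i:ℕ)) from by omega, ← hs ((i:ℕ)) (by omega)]; push_cast; ring1)
    | (rw [show 2*M-((i:ℕ)) = 2*M-1-((i:ℕ)-1) from by omega, ← hs ((i:ℕ)-1) (by omega)]; push_cast; ring1)
    | (rw [show ((j:ℕ)) = (i:ℕ)-1 from by omega, show 2*M-((i:ℕ)) = 2*M-1-((i:ℕ)-1) from by omega,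
        ← hs ((i:ℕ)-1) (by omega)]; push_cast; ring1)
    | (rw [show ((j:ℕ)) = (i:ℕ)-1 from by omega, hs ((i:ℕ)-1) (by omega),
        show 2*M-1-((i:ℕ)-1) = ((i:ℕ)) from by omega]; push_cast;
        linear_combination ((J (i:ℕ) : ℝ) : ℂ) * habC)
    | (rw [hs ((i:ℕ)-1) (by omega), show 2*M-1-((i:ℕ)-1) = ((i:ℕ)) from by omega]; push_cast;
        linear_combination ((J (i:ℕ) : ℝ) : ℂ) * habC))
  · simp only [show (((i:ℕ)) = M-1) = False from eq_false (by omega),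
      show (((i:ℕ)) = M) = False from eq_false (by omega),
      show (((i:ℕ))+1 < M) = False from eq_false (by omega),
      show (((i:ℕ))+1 = M) = False from eq_false (by omega),
      show (((i:ℕ))+1 ≠ M) = True from eq_true (by omega),
      show (1 ≤ ((i:ℕ))) = True from eq_true (by omega),
      show (((i:ℕ))-1 = M-1) = False from eq_false (by omega),
      show (((i:ℕ))-1 = M) = True from eq_true (by omega),
      show (((i:ℕ))-1 < M) = False from eq_false (by omega),
      show (((i:ℕ))-1 ≠ M) = False from eq_false (by omega),
      show (((i:ℕ)) < M) = False from eq_false (by omega),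
      show (((i:ℕ)) ≠ M) = True from eq_true (by omega),
      dite_true, dite_false, ite_true, ite_false, and_true, and_false, true_and, false_and]
    split_ifs <;> (first
    | (exfalso; omega)
    | (push_cast; ring1)
    | (rw [show ((j:ℕ)) = (i:ℕ)-1 from by omega]; push_cast; ring1)
    | (rw [show ((j:ℕ)) = 2*M-1-((i:ℕ)) from by omega, ← hs ((i:ℕ)) (by omega)]; push_cast; ring1)
    | (rw [show 2*M-((i:ℕ)) = 2*M-1-((i:ℕ)-1) from by omega, ← hs ((i:ℕ)-1) (by omega)]; push_cast; ring1)
    | (rw [show ((j:ℕ)) = (i:ℕ)-1 from by omega, show 2*M-((i:ℕ)) = 2*M-1-((i:ℕ)-1) from by omega,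
        ← hs ((i:ℕ)-1) (by omega)]; push_cast; ring1)
    | (rw [show ((j:ℕ)) = (i:ℕ)-1 from by omega, hs ((i:ℕ)-1) (by omega),
        show 2*M-1-((i:ℕ)-1) = ((i:ℕ)) from by omega]; push_cast;
        linear_combination ((J (i:ℕ) : ℝ) : ℂ) * habC)
    | (rw [hs ((i:ℕ)-1) (by omega), show 2*M-1-((i:ℕ)-1) = ((i:ℕ)) from by omega]; push_cast;
        linear_combination ((J (i:ℕ) : ℝ) : ℂ) * habC))
  · simp only [show (((i:ℕ)) = M-1) = False from eq_false (by omega),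
      show (((i:ℕ)) = M) = False from eq_false (by omega),
      show (((i:ℕ))+1 < M) = False from eq_false (by omega),
      show (((i:ℕ))+1 = M) = False from eq_false (by omega),
      show (((i:ℕ))+1 ≠ M) = True from eq_true (by omega),
      show (1 ≤ ((i:ℕ))) = True from eq_true (by omega),
      show (((i:ℕ))-1 = M-1) = False from eq_false (by omega),
      show (((i:ℕ))-1 = M) = False from eq_false (by omega),
      show (((i:ℕ))-1 < M) = False from eq_false (by omega),
      show (((i:ℕ))-1 ≠ M) = True from eq_true (by omega),
      show (((i:ℕ)) < M) = False from eq_false (by omega),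
      show (((i:ℕ)) ≠ M) = True from eq_true (by omega),
      dite_true, dite_false, ite_true, ite_false, and_true, and_false, true_and, false_and]
    split_ifs <;> (first
    | (exfalso; omega)
    | (push_cast; ring1)
    | (rw [show ((j:ℕ)) = (i:ℕ)-1 from by omega]; push_cast; ring1)
    | (rw [show ((j:ℕ)) = 2*M-1-((i:ℕ)) from by omega, ← hs ((i:ℕ)) (by omega)]; push_cast; ring1)
    | (rw [show 2*M-((i:ℕ)) = 2*M-1-((i:ℕ)-1) from by omega, ← hs ((i:ℕ)-1) (by omega)]; push_cast; ring1)
    | (rw [show ((j:ℕ)) = (i:ℕ)-1 from by omega, show 2*M-((i:ℕ)) = 2*M-1-((i:ℕ)-1) from by omega,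
        ← hs ((i:ℕ)-1) (by omega)]; push_cast; ring1)
    | (rw [show ((j:ℕ)) = (i:ℕ)-1 from by omega, hs ((i:ℕ)-1) (by omega),
        show 2*M-1-((i:ℕ)-1) = ((i:ℕ)) from by omega]; push_cast;
        linear_combination ((J (i:ℕ) : ℝ) : ℂ) * habC)
    | (rw [hs ((i:ℕ)-1) (by omega), show 2*M-1-((i:ℕ)-1) = ((i:ℕ)) from by omega]; push_cast;
        linear_combination ((J (i:ℕ) : ℝ) : ℂ) * habC))

end Stmt17Aux


set_option maxHeartbeats 1000000 in
/-- Fractional revival: for an odd-length `N = 2M+1` mirror-symmetric field-free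
tridiagonal chain with PST at `t₀`, replacing the two central couplings
`J_{(N−1)/2} → √2 cos θ · J_{(N−1)/2}`, `J_{(N+1)/2} → √2 sin θ · J_{(N+1)/2}` yields a
chain `H̃` with `e^{-iH̃t₀}|1⟩ = e^{iφ'}(cos 2θ |1⟩ + sin 2θ |N⟩)` up to a phase `φ'`. -/
theorem stmt17 (M : ℕ) (hM : 1 ≤ M) (t₀ φ θ : ℝ) (ht₀ : 0 < t₀)
    (hθ : 0 < θ ∧ θ < Real.pi / 2)
    (J : ℕ → ℝ)
    (hJpos : ∀ k, k + 1 < 2 * M + 1 → 0 < J k)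
    (hJsym : ∀ k, k + 1 < 2 * M + 1 → J k = J (2 * M - 1 - k))
    (H : Matrix (Fin (2 * M + 1)) (Fin (2 * M + 1)) ℂ)
    (hH : ∀ i j : Fin (2 * M + 1), H i j =
      if (i : ℕ) + 1 = (j : ℕ) then (J i : ℂ)
      else if (j : ℕ) + 1 = (i : ℕ) then (J j : ℂ) else 0)
    (hPST : (NormedSpace.exp ((-(Complex.I * t₀)) • H)) *ᵥ
        (Pi.single (0 : Fin (2 * M + 1)) 1 : Fin (2 * M + 1) → ℂ) =
      Complex.exp (Complex.I * φ) • (Pi.single (Fin.last (2 * M)) 1 : Fin (2 * M + 1) → ℂ))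
    (Jt : ℕ → ℝ)
    (hJt : ∀ k, Jt k =
      if k = M - 1 then Real.sqrt 2 * Real.cos θ * J k
      else if k = M then Real.sqrt 2 * Real.sin θ * J k
      else J k)
    (Ht : Matrix (Fin (2 * M + 1)) (Fin (2 * M + 1)) ℂ)
    (hHt : ∀ i j : Fin (2 * M + 1), Ht i j =
      if (i : ℕ) + 1 = (j : ℕ) then (Jt i : ℂ)
      else if (j : ℕ) + 1 = (i : ℕ) then (Jt j : ℂ) else 0) :
    ∃ φ' : ℝ,
      (NormedSpace.exp ((-(Complex.I * t₀)) • Ht)) *ᵥ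
          (Pi.single (0 : Fin (2 * M + 1)) 1 : Fin (2 * M + 1) → ℂ) =
        Complex.exp (Complex.I * φ') •
          ((Real.cos (2 * θ) : ℂ) • (Pi.single (0 : Fin (2 * M + 1)) 1 : Fin (2 * M + 1) → ℂ) +
           (Real.sin (2 * θ) : ℂ) • (Pi.single (Fin.last (2 * M)) 1 : Fin (2 * M + 1) → ℂ)) := by
  classical
  obtain ⟨hθ1, hθ2⟩ := hθ
  have hs : ∀ k, k < 2*M → J k = J (2*M-1-k) := fun k hk => hJsym k (by omega)
  set a : ℝ := (Real.cos θ - Real.sin θ)/Real.sqrt 2 with ha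
  set b : ℝ := (Real.cos θ + Real.sin θ)/Real.sqrt 2 with hb
  have hs2 : Real.sqrt 2 * Real.sqrt 2 = 2 := Real.mul_self_sqrt (by norm_num)
  have hs2p : Real.sqrt 2 ^ 2 = 2 := Real.sq_sqrt (by norm_num)
  have hs2ne : Real.sqrt 2 ≠ 0 := by positivity
  have hpyth := Real.sin_sq_add_cos_sq θ
  have hab : a^2 + b^2 = 1 := by
    rw [ha, hb, div_pow, div_pow, hs2p]
    nlinarith [hpyth]
  have hapb : a + b = Real.sqrt 2 * Real.cos θ := by
    rw [ha, hb, ← add_div, div_eq_iff hs2ne]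
    linear_combination (-(Real.cos θ)) * hs2
  have hbma : b - a = Real.sqrt 2 * Real.sin θ := by
    rw [hb, ha, div_sub_div_same, div_eq_iff hs2ne]
    linear_combination (-(Real.sin θ)) * hs2
  have hcosR : Real.cos (2*θ) = 2*(a*b) := by
    rw [Real.cos_two_mul, ha, hb, div_mul_div_comm, hs2]
    nlinarith [hpyth]
  have hsinR : Real.sin (2*θ) = b^2 - a^2 := by
    rw [Real.sin_two_mul, hb, ha, div_pow, div_pow, hs2p]
    ring
  -- tridiagonal normal forms
  have hHtri : H = Stmt17Aux.triM M J := by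
    ext i j
    rw [hH]
    simp only [Stmt17Aux.triM, Matrix.of_apply]
    split_ifs <;> first | (exfalso; omega) | ring1 | simp
  have hJt2 : ∀ k, Jt k = if k = M-1 then (a+b)*J k else if k = M then (b-a)*J k else J k := by
    intro k
    rw [hJt k, hapb, hbma]
  have hHttri : Ht = Stmt17Aux.triM M Jt := by
    ext i j
    rw [hHt]
    simp only [Stmt17Aux.triM, Matrix.of_apply]
    split_ifs <;> first | (exfalso; omega) | ring1 | simp
  -- the mixing matrices
  set U := Stmt17Aux.mixM M a b with hU
  set P := Stmt17Aux.mixM M 0 1 with hP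
  have hUU : U * U = 1 := Stmt17Aux.mix_mul_mix M a b hab
  have hPP : P * P = 1 := Stmt17Aux.mix_mul_mix M 0 1 (by norm_num)
  have hKey : Stmt17Aux.triM M Jt * U = U * Stmt17Aux.triM M J :=
    Stmt17Aux.key M hM a b hab J Jt hs hJt2
  have hPcomm : Stmt17Aux.triM M J * P = P * Stmt17Aux.triM M J :=
    Stmt17Aux.key M hM 0 1 (by norm_num) J J hs (by intro k; split_ifs <;> ring)
  have hUunit : IsUnit U := ⟨⟨U, U, hUU, hUU⟩, rfl⟩
  have hUinv : U⁻¹ = U := Matrix.inv_eq_right_inv hUU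
  have hHtconj : Ht = U * H * U := by
    rw [hHttri, hHtri]
    calc Stmt17Aux.triM M Jt = Stmt17Aux.triM M Jt * (U * U) := by rw [hUU, mul_one]
      _ = (Stmt17Aux.triM M Jt * U) * U := by rw [mul_assoc]
      _ = U * Stmt17Aux.triM M J * U := by rw [hKey]
  set E := NormedSpace.exp ((-(Complex.I * (t₀:ℂ))) • H) with hE
  have hexpHt : NormedSpace.exp ((-(Complex.I * (t₀:ℂ))) • Ht) = U * E * U := by
    have h1 : (-(Complex.I * (t₀:ℂ))) • Ht = U * ((-(Complex.I * (t₀:ℂ))) • H) * U⁻¹ := by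
      rw [hUinv, hHtconj, Matrix.mul_smul, Matrix.smul_mul]
    rw [h1, Matrix.exp_conj U _ hUunit, hUinv, hE]
  set e0 : Fin (2*M+1) → ℂ := Pi.single (0 : Fin (2*M+1)) 1 with he0
  set eN : Fin (2*M+1) → ℂ := Pi.single (Fin.last (2*M)) 1 with heN
  have hUe0 : U *ᵥ e0 = (a:ℂ) • e0 + (b:ℂ) • eN := by
    rw [he0, heN]
    funext i
    simp only [Matrix.mulVec_single_one, Matrix.col_apply, hU, Stmt17Aux.mixM, Matrix.of_apply, Stmt17Aux.dd,
      Stmt17Aux.rv, Pi.add_apply, Pi.smul_apply, Pi.single_apply, smul_eq_mul, mul_one,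
      Fin.ext_iff]
    have h0 : ((0 : Fin (2*M+1)) : ℕ) = 0 := rfl
    have hl : ((Fin.last (2*M)) : ℕ) = 2*M := rfl
    split_ifs <;> first | (exfalso; omega) | ring1
  have hUeN : U *ᵥ eN = (b:ℂ) • e0 + (-(a:ℂ)) • eN := by
    rw [he0, heN]
    funext i
    simp only [Matrix.mulVec_single_one, Matrix.col_apply, hU, Stmt17Aux.mixM, Matrix.of_apply, Stmt17Aux.dd,
      Stmt17Aux.rv, Pi.add_apply, Pi.smul_apply, Pi.single_apply, smul_eq_mul, mul_one,
      Fin.ext_iff]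
    have h0 : ((0 : Fin (2*M+1)) : ℕ) = 0 := rfl
    have hl : ((Fin.last (2*M)) : ℕ) = 2*M := rfl
    split_ifs <;> first | (exfalso; omega) | ring1
  have hPe0 : P *ᵥ e0 = eN := by
    rw [he0, heN]
    funext i
    simp only [Matrix.mulVec_single_one, Matrix.col_apply, hP, Stmt17Aux.mixM, Matrix.of_apply, Stmt17Aux.dd,
      Stmt17Aux.rv, Pi.single_apply, smul_eq_mul, mul_one,
      Fin.ext_iff]
    have h0 : ((0 : Fin (2*M+1)) : ℕ) = 0 := rfl
    have hl : ((Fin.last (2*M)) : ℕ) = 2*M := rfl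
    split_ifs <;> first | (exfalso; omega) | norm_num
  have hPeN : P *ᵥ eN = e0 := by
    rw [he0, heN]
    funext i
    simp only [Matrix.mulVec_single_one, Matrix.col_apply, hP, Stmt17Aux.mixM, Matrix.of_apply, Stmt17Aux.dd,
      Stmt17Aux.rv, Pi.single_apply, smul_eq_mul, mul_one,
      Fin.ext_iff]
    have h0 : ((0 : Fin (2*M+1)) : ℕ) = 0 := rfl
    have hl : ((Fin.last (2*M)) : ℕ) = 2*M := rfl
    split_ifs <;> first | (exfalso; omega) | norm_num
  have hPSTE : E *ᵥ e0 = Complex.exp (Complex.I * φ) • eN := hPST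
  have hcommE : E * P = P * E := by
    have h1 : Commute ((-(Complex.I * (t₀:ℂ))) • H) P := by
      apply Commute.smul_left
      show H * P = P * H
      rw [hHtri]
      exact hPcomm
    exact h1.exp_left
  have hEeN : E *ᵥ eN = Complex.exp (Complex.I * φ) • e0 := by
    calc E *ᵥ eN = E *ᵥ (P *ᵥ e0) := by rw [hPe0]
      _ = (E * P) *ᵥ e0 := by rw [Matrix.mulVec_mulVec]
      _ = (P * E) *ᵥ e0 := by rw [hcommE]
      _ = P *ᵥ (E *ᵥ e0) := by rw [Matrix.mulVec_mulVec]
      _ = P *ᵥ (Complex.exp (Complex.I * φ) • eN) := by rw [hPSTE]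
      _ = Complex.exp (Complex.I * φ) • (P *ᵥ eN) := by rw [Matrix.mulVec_smul]
      _ = Complex.exp (Complex.I * φ) • e0 := by rw [hPeN]
  refine ⟨φ, ?_⟩
  calc (NormedSpace.exp ((-(Complex.I * (t₀:ℂ))) • Ht)) *ᵥ e0
      = (U * E * U) *ᵥ e0 := by rw [hexpHt]
    _ = U *ᵥ (E *ᵥ (U *ᵥ e0)) := by rw [Matrix.mulVec_mulVec, Matrix.mulVec_mulVec]
    _ = U *ᵥ (E *ᵥ ((a:ℂ) • e0 + (b:ℂ) • eN)) := by rw [hUe0]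
    _ = U *ᵥ ((a:ℂ) • (E *ᵥ e0) + (b:ℂ) • (E *ᵥ eN)) := by
        rw [Matrix.mulVec_add, Matrix.mulVec_smul, Matrix.mulVec_smul]
    _ = U *ᵥ ((a:ℂ) • (Complex.exp (Complex.I * φ) • eN)
          + (b:ℂ) • (Complex.exp (Complex.I * φ) • e0)) := by rw [hPSTE, hEeN]
    _ = Complex.exp (Complex.I * φ) • ((a:ℂ) • (U *ᵥ eN) + (b:ℂ) • (U *ᵥ e0)) := by
        rw [Matrix.mulVec_add, Matrix.mulVec_smul, Matrix.mulVec_smul,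
          Matrix.mulVec_smul, Matrix.mulVec_smul]
        rw [smul_comm ((a:ℂ)) (Complex.exp (Complex.I * φ)), smul_comm ((b:ℂ)) (Complex.exp (Complex.I * φ)), smul_add]
    _ = Complex.exp (Complex.I * φ) • ((a:ℂ) • ((b:ℂ) • e0 + (-(a:ℂ)) • eN)
          + (b:ℂ) • ((a:ℂ) • e0 + (b:ℂ) • eN)) := by rw [hUeN, hUe0]
    _ = Complex.exp (Complex.I * φ) •
          ((Real.cos (2 * θ) : ℂ) • e0 + (Real.sin (2 * θ) : ℂ) • eN) := by
        congr 1
        have hc : (Real.cos (2*θ) : ℂ) = 2*((a:ℂ)*(b:ℂ)) := by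
          rw [hcosR]; push_cast; ring
        have hsn : (Real.sin (2*θ) : ℂ) = (b:ℂ)^2 - (a:ℂ)^2 := by
          rw [hsinR]; push_cast; ring
        rw [hc, hsn, smul_add, smul_add, smul_smul, smul_smul, smul_smul, smul_smul]
        rw [← add_assoc]
        module
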